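/- For all positive real numbers a and b with a ≠ b, let ā = (a+b)/2 be the arithmetic mean, ǧ = √(ab) the geometric mean, and â = (b−a)/(log b − log a) the logarithmic mean, and define ρ* = ǧ²/(√â·√ā). Then |ρ* − ā| ≤ (1/4)·|b − a|·|log b − log a|. -/

import Mathlib

/-- The logarithmic mean of two positive reals: `(b-a)/(log b - log a)` when `a ≠ b`,
and `a` when `a = b`. -/
noncomputable def logMean (a b : ℝ) : ℝ :=
  if a = b then a else (b - a) / (Real.log b - Real.log a)

private lemma key1' {t : ℝ} (ht : 1 ≤ t) : Real.log t ≤ (t - t⁻¹) / 2 := by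
  have hmono : MonotoneOn (fun x : ℝ => (x - x⁻¹) / 2 - Real.log x) (Set.Ici 1) := by
    have hd : ∀ x ∈ Set.Ici (1:ℝ), HasDerivAt (fun x : ℝ => (x - x⁻¹) / 2 - Real.log x)
        ((1 - -(x^2)⁻¹) / 2 - x⁻¹) x := by
      intro x hx
      have hx0 : x ≠ 0 := by
        have : (1:ℝ) ≤ x := hx
        linarith
      exact (((hasDerivAt_id x).sub (hasDerivAt_inv hx0)).div_const 2).sub
        (Real.hasDerivAt_log hx0)
    apply monotoneOn_of_deriv_nonneg (convex_Ici 1)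
    · exact fun x hx => (hd x hx).continuousAt.continuousWithinAt
    · intro x hx
      rw [interior_Ici] at hx
      exact ((hd x (Set.Ioi_subset_Ici_self hx)).differentiableAt).differentiableWithinAt
    · intro x hx
      rw [interior_Ici] at hx
      have hx1 : (1:ℝ) < x := hx
      have hx0 : (0:ℝ) < x := by linarith
      rw [(hd x (le_of_lt hx1)).deriv]
      have : (1 - -(x^2)⁻¹) / 2 - x⁻¹ = (x - 1)^2 / (2 * x^2) := by
        field_simp
        ring
      rw [this]
      positivity
  have h := hmono (Set.self_mem_Ici) (Set.mem_Ici.2 ht) ht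
  simp only [Real.log_one, inv_one] at h
  norm_num at h
  linarith

private lemma key2' {t : ℝ} (ht : 1 ≤ t) : 2 * (t - 1) / (t + 1) ≤ Real.log t := by
  have hmono : MonotoneOn (fun x : ℝ => Real.log x - 2 * (x - 1) / (x + 1)) (Set.Ici 1) := by
    have hd : ∀ x ∈ Set.Ici (1:ℝ), HasDerivAt (fun x : ℝ => Real.log x - 2 * (x - 1) / (x + 1))
        (x⁻¹ - (2 * 1 * (x + 1) - 2 * (x - 1) * 1) / (x + 1)^2) x := by
      intro x hx
      have hx1 : (1:ℝ) ≤ x := hx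
      have hx0 : x ≠ 0 := by linarith
      have hx0' : x + 1 ≠ 0 := by linarith
      exact (Real.hasDerivAt_log hx0).sub
        ((((hasDerivAt_id x).sub_const 1).const_mul 2).div ((hasDerivAt_id x).add_const 1) hx0')
    apply monotoneOn_of_deriv_nonneg (convex_Ici 1)
    · exact fun x hx => (hd x hx).continuousAt.continuousWithinAt
    · intro x hx
      rw [interior_Ici] at hx
      exact ((hd x (Set.Ioi_subset_Ici_self hx)).differentiableAt).differentiableWithinAt
    · intro x hx
      rw [interior_Ici] at hx
      have hx1 : (1:ℝ) < x := hx
      have hx0 : (0:ℝ) < x := by linarith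
      rw [(hd x (le_of_lt hx1)).deriv]
      have hxx : x + 1 ≠ 0 := by linarith
      have : x⁻¹ - (2 * 1 * (x + 1) - 2 * (x - 1) * 1) / (x + 1)^2
          = (x - 1)^2 / (x * (x + 1)^2) := by
        field_simp
        ring
      rw [this]
      positivity
  have h := hmono (Set.self_mem_Ici) (Set.mem_Ici.2 ht) ht
  simp only [Real.log_one] at h
  norm_num at h
  linarith

private lemma aux_main (a b : ℝ) (ha : 0 < a) (h : a < b) :
    |Real.sqrt (a * b) ^ 2 / (Real.sqrt ((b - a) / (Real.log b - Real.log a)) * Real.sqrt ((a + b) / 2)) - (a + b) / 2|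
      ≤ (1 / 4) * |b - a| * |Real.log b - Real.log a| := by
  have hb : 0 < b := lt_trans ha h
  have hD : 0 < Real.log b - Real.log a := sub_pos.2 (Real.log_lt_log ha h)
  set D := Real.log b - Real.log a with hDdef
  set A := (a + b) / 2 with hAdef
  have hA : 0 < A := by positivity
  set L := (b - a) / D with hLdef
  have hL : 0 < L := div_pos (by linarith) hD
  clear_value L
  clear_value A
  have hlog : Real.log (b / a) = D := Real.log_div hb.ne' ha.ne'
  clear_value D
  have habpos : 0 < a * b := mul_pos ha hb
  have ht : 1 ≤ b / a := (one_le_div ha).2 h.le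
  -- h2 : 2(b-a) ≤ D(a+b)
  have hk2 := key2' ht
  rw [hlog, div_le_iff₀ (by positivity : (0:ℝ) < b / a + 1)] at hk2
  have e1 : (2 * (b / a - 1)) * a = 2 * (b - a) := by field_simp
  have e2' : (b / a + 1) * a = a + b := by field_simp; ring
  have e2 : (D * (b / a + 1)) * a = D * (a + b) := by rw [mul_assoc, e2']
  have h2 : 2 * (b - a) ≤ D * (a + b) := by
    have := mul_le_mul_of_nonneg_right hk2 ha.le
    linarith
  -- h1 : D * (a*b) ≤ (b-a)*(a+b)/2
  have hk1 := key1' ht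
  rw [hlog] at hk1
  have e3 : ((b / a - (b / a)⁻¹) / 2) * (a * b) = (b - a) * (a + b) / 2 := by
    field_simp; ring
  have h1 : D * (a * b) ≤ (b - a) * (a + b) / 2 := by
    have := mul_le_mul_of_nonneg_right hk1 habpos.le
    linarith
  -- L ≤ A
  have hAD : A * D = D * (a + b) / 2 := by rw [hAdef]; ring
  have hLA : L ≤ A := by
    rw [hLdef, div_le_iff₀ hD]
    linarith
  -- ab ≤ L * A
  have hbA : (b - a) * A = (b - a) * (a + b) / 2 := by rw [hAdef]; ring
  have hab : a * b ≤ L * A := by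
    rw [hLdef, div_mul_eq_mul_div, le_div_iff₀ hD]
    linarith
  -- rewrite goal
  rw [Real.sq_sqrt habpos.le, ← Real.sqrt_mul hL.le]
  set S := Real.sqrt (L * A) with hSdef
  have hSpos : 0 < S := Real.sqrt_pos.2 (by positivity)
  have hS2 : S * S = L * A := Real.mul_self_sqrt (by positivity)
  have hSA : S ≤ A := by
    calc S ≤ Real.sqrt (A * A) := Real.sqrt_le_sqrt (mul_le_mul_of_nonneg_right hLA hA.le)
    _ = A := Real.sqrt_mul_self hA.le
  clear_value S
  have hrho_le : a * b / S ≤ A := by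
    rw [div_le_iff₀ hSpos]
    calc a * b ≤ L * A := hab
      _ = S * S := hS2.symm
      _ ≤ A * S := mul_le_mul_of_nonneg_right hSA hSpos.le
  have hrho_ge : a * b / A ≤ a * b / S := by gcongr
  rw [abs_of_nonpos (by linarith : a * b / S - A ≤ 0), abs_of_pos (sub_pos.2 h),
    abs_of_pos hD]
  have efin : A - a * b / A = (A * A - a * b) / A := by field_simp
  have hfinal : A - a * b / A ≤ 1 / 4 * (b - a) * D := by
    rw [efin, div_le_iff₀ hA, hAdef]
    nlinarith [mul_le_mul_of_nonneg_left h2 (by linarith : (0:ℝ) ≤ b - a)]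
  linarith

/-- For distinct positive reals, with `ā` the arithmetic mean, `ǧ` the geometric mean and
`â` the logarithmic mean, the average `ρ* = ǧ²/(√â·√ā)` satisfies
`|ρ* − ā| ≤ (1/4)·|b − a|·|log b − log a|`. -/
theorem special_average_close_to_arith (a b : ℝ) (ha : 0 < a) (hb : 0 < b) (hab : a ≠ b) :
    |Real.sqrt (a * b) ^ 2 / (Real.sqrt (logMean a b) * Real.sqrt ((a + b) / 2)) - (a + b) / 2|
      ≤ (1 / 4) * |b - a| * |Real.log b - Real.log a| := by
  rw [logMean, if_neg hab]
  rcases lt_or_gt_of_ne hab with hlt | hgt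
  · exact aux_main a b ha hlt
  · have := aux_main b a hb hgt
    rw [mul_comm b a, abs_sub_comm a b, abs_sub_comm (Real.log a) (Real.log b),
      add_comm b a,
      show (a - b) / (Real.log a - Real.log b) = (b - a) / (Real.log b - Real.log a) from by
        rw [← neg_sub b a, ← neg_sub (Real.log b) (Real.log a), neg_div_neg_eq]] at this
    exact this
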